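/- Let T be a rigid object in C. For every object Y of C there exist an object X in C(T) and a map f : X → Y belonging to the class S. -/

import Mathlib

/-!
Common setup: `C` is a Hom-finite, Krull-Schmidt (= idempotent complete, given
Hom-finiteness over a field), `k`-linear triangulated category with suspension
functor `Σ = shiftFunctor C (1 : ℤ)`, and `T` is a rigid object of `C`.
-/

noncomputable section

open CategoryTheory CategoryTheory.Limits CategoryTheory.Pretriangulated

universe v u

namespace PaperBM

variable {C : Type u} [Category.{v} C] [Preadditive C] [HasZeroObject C]
  [HasShift C ℤ] [∀ n : ℤ, (shiftFunctor C n).Additive] [Pretriangulated C]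
  [HasFiniteBiproducts C]

/-- `X` lies in `add T`: it is a direct summand of a finite direct sum of copies of `T`. -/
def memAdd (T X : C) : Prop :=
  ∃ (n : ℕ) (s : X ⟶ ⨁ (fun _ : Fin n => T)) (r : (⨁ fun _ : Fin n => T) ⟶ X), s ≫ r = 𝟙 X

/-- `T` is rigid: `Hom_C(T, ΣT) = 0`. -/
def IsRigidObj (T : C) : Prop := ∀ f : T ⟶ (shiftFunctor C (1 : ℤ)).obj T, f = 0

/-- `Y ∈ T^⊥`, i.e. `Hom_C(X, ΣY) = 0` for all `X ∈ add T`. -/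
def memTperp (T Y : C) : Prop :=
  ∀ (X : C), memAdd T X → ∀ f : X ⟶ (shiftFunctor C (1 : ℤ)).obj Y, f = 0

/-- `Y ∈ ⊥T`, i.e. `Hom_C(Y, ΣX) = 0` for all `X ∈ add T`. -/
def memPerpT (T Y : C) : Prop :=
  ∀ (X : C), memAdd T X → ∀ f : Y ⟶ (shiftFunctor C (1 : ℤ)).obj X, f = 0

/-- `Y ∈ ΣT^⊥`, the image of `T^⊥` under the suspension `Σ`. -/
def memSigmaTperp (T Y : C) : Prop :=
  ∃ Z : C, memTperp T Z ∧ Nonempty (Y ≅ (shiftFunctor C (1 : ℤ)).obj Z)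

/-- The map `f` factors through an object belonging to the class `P` of objects. -/
def FactorsThru (P : C → Prop) {A B : C} (f : A ⟶ B) : Prop :=
  ∃ (Z : C) (g : A ⟶ Z) (h : Z ⟶ B), P Z ∧ g ≫ h = f

/-- The class `S̃` of maps `f : X ⟶ Y` such that in a completion
`Σ⁻¹Z →h X →f Y →g Z` of `f` to a triangle (where `A` plays the role of `Σ⁻¹Z`,
so that `Z = ΣA`), both `g` and `h` factor through an object of `ΣT^⊥`. -/
def Stilde (T : C) : MorphismProperty C := fun X Y f =>
  ∃ (A : C) (h : A ⟶ X) (g : Y ⟶ (shiftFunctor C (1 : ℤ)).obj A),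
    (Triangle.mk h f g ∈ distTriang C) ∧
    FactorsThru (memSigmaTperp T) g ∧ FactorsThru (memSigmaTperp T) h

/-- The class `S` of maps `f : X ⟶ Y` such that in a completion
`Σ⁻¹Z →h X →f Y →g Z` of `f` to a triangle (where `A` plays the role of `Σ⁻¹Z`,
so that `Z = ΣA`), `g` factors through an object of `ΣT^⊥` and `Σ⁻¹Z ∈ ΣT^⊥`. -/
def Sclass (T : C) : MorphismProperty C := fun X Y f =>
  ∃ (A : C) (h : A ⟶ X) (g : Y ⟶ (shiftFunctor C (1 : ℤ)).obj A),
    (Triangle.mk h f g ∈ distTriang C) ∧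
    FactorsThru (memSigmaTperp T) g ∧ memSigmaTperp T A

/-- `X ∈ C(T)`: there is a triangle `T₁ → T₀ → X → ΣT₁` with `T₀, T₁ ∈ add T`. -/
def memCT (T X : C) : Prop :=
  ∃ (T₁ T₀ : C) (a : T₁ ⟶ T₀) (b : T₀ ⟶ X) (c : X ⟶ (shiftFunctor C (1 : ℤ)).obj T₁),
    memAdd T T₁ ∧ memAdd T T₀ ∧ (Triangle.mk a b c ∈ distTriang C)

/-- `f : X₀ ⟶ Y` is a right `P`-approximation of `Y`. -/
def IsRightApprox (P : C → Prop) {X₀ Y : C} (f : X₀ ⟶ Y) : Prop :=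
  P X₀ ∧ ∀ (W : C), P W → ∀ g : W ⟶ Y, ∃ g' : W ⟶ X₀, g' ≫ f = g

/-- `f : Y ⟶ X₀` is a left `P`-approximation of `Y`. -/
def IsLeftApprox (P : C → Prop) {Y X₀ : C} (f : Y ⟶ X₀) : Prop :=
  P X₀ ∧ ∀ (W : C), P W → ∀ g : Y ⟶ W, ∃ g' : X₀ ⟶ W, f ≫ g' = g

/-- The map `f : X₀ ⟶ Y` is right minimal. -/
def IsRightMinimal {X₀ Y : C} (f : X₀ ⟶ Y) : Prop :=
  ∀ g : X₀ ⟶ X₀, g ≫ f = f → IsIso g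

/-- The functor `H = Hom_C(T, -) : C ⥤ Mod End_C(T)ᵒᵖ`.  Here, with Mathlib's
conventions, the endomorphism ring `End (Opposite.op T)` of `T` viewed in `Cᵒᵖ` plays
the role of `End_C(T)ᵒᵖ`, so that each `Hom_C(T, X)` is a left module over it. -/
abbrev homFunctor (T : C) : C ⥤ ModuleCat.{v} (End (Opposite.op T)) :=
  preadditiveCoyonedaObj T ⋙ ModuleCat.restrictScalars.{v}
    ({ toFun := fun r => MulOpposite.op r.unop
       map_one' := rfl
       map_mul' := fun _ _ => rfl
       map_zero' := rfl
       map_add' := fun _ _ => rfl } : End (Opposite.op T) →+* (End T)ᵐᵒᵖ)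

/-- The predicate on `End_C(T)ᵒᵖ`-modules of being finite-dimensional (equivalently,
since `End_C(T)` is a finite-dimensional algebra, finitely generated). -/
abbrev isFinDim (T : C) : ModuleCat.{v} (End (Opposite.op T)) → Prop :=
  fun M => Module.Finite (End (Opposite.op T)) M

/-- The category `mod End_C(T)ᵒᵖ` of finite-dimensional `End_C(T)ᵒᵖ`-modules. -/
abbrev fdMod (T : C) := ObjectProperty.FullSubcategory (isFinDim T)

/-- The ideal relation on `C(T)` of maps factoring through an object of `ΣT^⊥`. -/
def homRelCT (T : C) : HomRel (ObjectProperty.FullSubcategory (memCT T)) :=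
  fun A B f g => FactorsThru (memSigmaTperp T) ((f - g).hom : A.obj ⟶ B.obj)

/-- The ideal relation on `C(T)` of maps factoring through an object of `add ΣT`. -/
def homRelCTadd (T : C) : HomRel (ObjectProperty.FullSubcategory (memCT T)) :=
  fun A B f g => FactorsThru (memAdd ((shiftFunctor C (1 : ℤ)).obj T)) ((f - g).hom : A.obj ⟶ B.obj)

/-- The ideal relation on `C` of maps factoring through an object of `add ΣT`. -/
def homRelAdd (T : C) : HomRel C :=
  fun A B f g => FactorsThru (memAdd ((shiftFunctor C (1 : ℤ)).obj T)) (f - g)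

end PaperBM

open PaperBM

namespace PaperBMAux

variable {C : Type u} [Category.{v} C] [Preadditive C] [HasZeroObject C]
  [HasShift C ℤ] [∀ n : ℤ, (shiftFunctor C n).Additive] [Pretriangulated C]
  [HasFiniteBiproducts C]

/-- Any map from `T` to a suspension of a finite direct sum of copies of `T` vanishes. -/
lemma rigid_biprod {T : C} (hT : IsRigidObj T) (n : ℕ)
    (c : T ⟶ (shiftFunctor C (1 : ℤ)).obj (⨁ fun _ : Fin n => T)) : c = 0 := by
  have htot := biproduct.total (f := fun _ : Fin n => T)
  calc c = c ≫ 𝟙 _ := (Category.comp_id c).symm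
    _ = c ≫ (shiftFunctor C (1 : ℤ)).map (∑ j : Fin n,
          biproduct.π (fun _ : Fin n => T) j ≫ biproduct.ι (fun _ : Fin n => T) j) := by
        rw [htot, (shiftFunctor C (1 : ℤ)).map_id]
    _ = ∑ j : Fin n, c ≫ ((shiftFunctor C (1 : ℤ)).map (biproduct.π (fun _ : Fin n => T) j) ≫
          (shiftFunctor C (1 : ℤ)).map (biproduct.ι (fun _ : Fin n => T) j)) := by
        rw [(shiftFunctor C (1 : ℤ)).map_sum, Preadditive.comp_sum]
        exact Finset.sum_congr rfl (fun j _ => by rw [Functor.map_comp])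
    _ = 0 := Finset.sum_eq_zero (fun j _ => by
        rw [← Category.assoc,
          hT (c ≫ (shiftFunctor C (1 : ℤ)).map (biproduct.π (fun _ : Fin n => T) j)),
          zero_comp])

/-- If all maps `T ⟶ W` vanish, then all maps `X' ⟶ W` with `X' ∈ add T` vanish. -/
lemma zero_of_add (T : C) {W : C} (hW : ∀ u : T ⟶ W, u = 0) {X' : C}
    (hX : memAdd T X') (φ : X' ⟶ W) : φ = 0 := by
  obtain ⟨n, s, r, hsr⟩ := hX
  have hr : r ≫ φ = 0 := by
    apply biproduct.hom_ext'
    intro j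
    rw [comp_zero, hW (biproduct.ι (fun _ : Fin n => T) j ≫ r ≫ φ)]
  calc φ = (s ≫ r) ≫ φ := by rw [hsr, Category.id_comp]
    _ = s ≫ (r ≫ φ) := by rw [Category.assoc]
    _ = 0 := by rw [hr, comp_zero]

/-- Existence of a right `add T`-approximation by a finite direct sum of copies of `T`. -/
lemma exists_approx (k : Type*) [Field k] [CategoryTheory.Linear k C]
    [∀ X Y : C, FiniteDimensional k (X ⟶ Y)] (T Y : C) : ∃ (n : ℕ) (f₀ : (⨁ fun _ : Fin n => T) ⟶ Y),
    ∀ g : T ⟶ Y, ∃ l : T ⟶ ⨁ (fun _ : Fin n => T), l ≫ f₀ = g := by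
  let b := Module.finBasis k (T ⟶ Y)
  refine ⟨Module.finrank k (T ⟶ Y), biproduct.desc (fun i => b i), fun g => ?_⟩
  refine ⟨biproduct.lift (fun i => (b.repr g i) • 𝟙 T), ?_⟩
  rw [biproduct.lift_desc]
  calc (∑ j, (b.repr g j • 𝟙 T) ≫ b j) = ∑ j, b.repr g j • b j := by
        refine Finset.sum_congr rfl (fun j _ => ?_)
        rw [CategoryTheory.Linear.smul_comp, Category.id_comp]
    _ = g := b.sum_repr g

end PaperBMAux

open PaperBMAux

/-- For every object `Y` of `C` there exist an object `X ∈ C(T)` and a map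
`f : X ⟶ Y` belonging to the class `S`. -/
theorem statement_9 {C : Type u} [Category.{v} C] [Preadditive C] [HasZeroObject C]
    [HasShift C ℤ] [∀ n : ℤ, (shiftFunctor C n).Additive] [Pretriangulated C]
    [HasFiniteBiproducts C]
    {k : Type*} [Field k] [CategoryTheory.Linear k C]
    [∀ X Y : C, FiniteDimensional k (X ⟶ Y)] [IsIdempotentComplete C]
    (T : C) (hT : IsRigidObj T) (Y : C) :
    ∃ (X : C) (f : X ⟶ Y), memCT T X ∧ Sclass T f := by
  classical
  -- Step 1: a right `add T`-approximation `f₀ : T₀ ⟶ Y`.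
  obtain ⟨n₀, f₀, hf₀⟩ := exists_approx k T Y
  -- Complete to a triangle `T₀ ⟶ Y ⟶ Z₁ ⟶ ΣT₀` and inverse-rotate it.
  obtain ⟨Z₁, δ, θ, hD1'⟩ := distinguished_cocone_triangle f₀
  have hD1 : (Triangle.mk f₀ δ θ).invRotate ∈ distTriang C :=
    inv_rot_of_distTriang _ hD1'
  set D1 := (Triangle.mk f₀ δ θ).invRotate with hD1def
  -- Step 2: a right `add T`-approximation `f₁ : T₁ ⟶ Y₁` of `Y₁ := Z₁⟦-1⟧`.
  obtain ⟨n₁, f₁, hf₁⟩ := exists_approx k T D1.obj₁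
  -- Step 3: complete `w := f₁ ≫ g` to a triangle `T₁ ⟶ T₀ ⟶ X ⟶ ΣT₁`.
  obtain ⟨X, p, q, hD3⟩ := distinguished_cocone_triangle (f₁ ≫ D1.mor₁)
  -- Step 4: TR3 provides `f : X ⟶ Y` compatible with `(f₁, 𝟙 T₀)`.
  obtain ⟨f, hpf, hqf⟩ := complete_distinguished_triangle_morphism
    (Triangle.mk (f₁ ≫ D1.mor₁) p q) D1 hD3 hD1 f₁ (𝟙 _) (Category.comp_id _)
  replace hpf : p ≫ f = D1.mor₂ := hpf.trans (Category.id_comp _)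
  dsimp only [Triangle.mk] at hpf hqf
  change X ⟶ Y at f
  -- `hpf : p ≫ f = f₀`, `hqf : q ≫ f₁⟦1⟧' = f ≫ D1.mor₃`
  -- Step 5: complete `f` to a triangle `X ⟶ Y ⟶ Z₄ ⟶ ΣX`.
  obtain ⟨Z₄, e₀, h₀, hD4'⟩ := distinguished_cocone_triangle f
  -- Basic vanishing: `Hom(T, Z₁) = 0`.
  have homTZ₁ : ∀ ξ : T ⟶ Z₁, ξ = 0 := by
    intro ξ
    have hθ : ξ ≫ θ = 0 := rigid_biprod hT n₀ (ξ ≫ θ)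
    obtain ⟨η, hη⟩ := Triangle.coyoneda_exact₃ _ hD1' ξ hθ
    dsimp only [Triangle.mk] at hη
    obtain ⟨η', hη'⟩ := hf₀ η
    have h12 := comp_distTriang_mor_zero₁₂ _ hD1'
    dsimp only [Triangle.mk] at h12
    erw [hη, ← hη', Category.assoc, h12, comp_zero]
  -- Key vanishing: any `χ : T ⟶ X` with `χ ≫ f = 0` is zero.
  have keyχ : ∀ χ : T ⟶ X, χ ≫ f = 0 → χ = 0 := by
    intro χ hχ
    have hq : χ ≫ q = 0 := rigid_biprod hT n₁ (χ ≫ q)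
    obtain ⟨v, hv⟩ := Triangle.coyoneda_exact₃ _ hD3 χ hq
    dsimp only [Triangle.mk] at hv
    have hv0 : v ≫ D1.mor₂ = 0 := by
      have hvpf : v ≫ p ≫ f = 0 := by erw [← Category.assoc, ← hv, hχ]
      rw [← hpf]
      exact hvpf
    obtain ⟨v', hv'⟩ := Triangle.coyoneda_exact₂ _ hD1 v hv0
    obtain ⟨v'', hv''⟩ := hf₁ v'
    calc χ = v ≫ p := hv
      _ = v'' ≫ (f₁ ≫ D1.mor₁) ≫ p := by rw [hv', ← hv'']; simp only [Category.assoc]; erw [Category.assoc, Category.assoc]; rfl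
      _ = 0 := by
          have h12 := comp_distTriang_mor_zero₁₂ _ hD3
          dsimp only [Triangle.mk] at h12
          erw [h12, comp_zero]
  -- Surjectivity of `Hom(ΣT, X) ⟶ Hom(ΣT, Y)`.
  have beta : ∀ s : (shiftFunctor C (1 : ℤ)).obj T ⟶ Y,
      ∃ r : (shiftFunctor C (1 : ℤ)).obj T ⟶ X, r ≫ f = s := by
    intro s
    obtain ⟨t, ht⟩ := (shiftFunctor C (1 : ℤ)).map_surjective (s ≫ D1.mor₃)
    have htg : t ≫ D1.mor₁ = 0 := by
      apply (shiftFunctor C (1 : ℤ)).map_injective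
      erw [Functor.map_comp, ht, Category.assoc, comp_distTriang_mor_zero₃₁ _ hD1,
        comp_zero, (shiftFunctor C (1 : ℤ)).map_zero]
    obtain ⟨t', ht'⟩ := hf₁ t
    have hρ : (shiftFunctor C (1 : ℤ)).map t' ≫
        (shiftFunctor C (1 : ℤ)).map (f₁ ≫ D1.mor₁) = 0 := by
      rw [← Functor.map_comp, ← Category.assoc, ht', htg, (shiftFunctor C (1 : ℤ)).map_zero]
    obtain ⟨r₁, hr₁⟩ := Triangle.coyoneda_exact₁ _ hD3 ((shiftFunctor C (1 : ℤ)).map t') hρ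
    dsimp only [Triangle.mk] at hr₁
    change (shiftFunctor C (1 : ℤ)).obj T ⟶ X at r₁
    have hd : (s - r₁ ≫ f) ≫ D1.mor₃ = 0 := by
      erw [Preadditive.sub_comp, Category.assoc r₁ f, ← hqf, ← Category.assoc r₁ q, ← hr₁,
        ← Functor.map_comp, ht', ht, sub_self]
    obtain ⟨d₁, hd₁⟩ := Triangle.coyoneda_exact₃ _ hD1 (s - r₁ ≫ f) hd
    refine ⟨r₁ + d₁ ≫ p, ?_⟩
    have : d₁ ≫ D1.mor₂ = d₁ ≫ p ≫ f := by erw [hpf]; rfl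
    rw [Preadditive.add_comp, Category.assoc]
    rw [this] at hd₁
    rw [← hd₁]
    abel
  -- `Hom(ΣT, Z₄) = 0`.
  have homT1Z₄ : ∀ ξ : (shiftFunctor C (1 : ℤ)).obj T ⟶ Z₄, ξ = 0 := by
    intro ξ
    obtain ⟨χ, hχ⟩ := (shiftFunctor C (1 : ℤ)).map_surjective (ξ ≫ h₀)
    have hχf : χ ≫ f = 0 := by
      apply (shiftFunctor C (1 : ℤ)).map_injective
      rw [Functor.map_comp, hχ, Category.assoc, (shiftFunctor C (1 : ℤ)).map_zero]
      have := comp_distTriang_mor_zero₃₁ _ hD4'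
      erw [this, comp_zero]
    have hξh : ξ ≫ h₀ = 0 := by
      rw [← hχ, keyχ χ hχf, (shiftFunctor C (1 : ℤ)).map_zero]
    obtain ⟨s, hs⟩ := Triangle.coyoneda_exact₃ _ hD4' ξ hξh
    dsimp only [Triangle.mk] at hs
    obtain ⟨r, hr⟩ := beta s
    have h12 := comp_distTriang_mor_zero₁₂ _ hD4'
    dsimp only [Triangle.mk] at h12
    erw [hs, ← hr, Category.assoc, h12, comp_zero]
  -- `Hom(T, Z₄⟦-1⟧) = 0`.
  have homTA : ∀ u : T ⟶ (shiftFunctor C (-1 : ℤ)).obj Z₄, u = 0 := by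
    intro u
    have h1 : (shiftFunctor C (1 : ℤ)).map u ≫
        (shiftEquiv C (1 : ℤ)).counitIso.hom.app Z₄ = 0 :=
      homT1Z₄ _
    have h2 : (shiftFunctor C (1 : ℤ)).map u = 0 := by
      have he : (shiftFunctor C (1 : ℤ)).map u
          = ((shiftFunctor C (1 : ℤ)).map u ≫ (shiftEquiv C (1 : ℤ)).counitIso.hom.app Z₄)
            ≫ (shiftEquiv C (1 : ℤ)).counitIso.inv.app Z₄ := by
        erw [Category.assoc, Iso.hom_inv_id_app]
        exact (Category.comp_id _).symm
      rw [he, h1, zero_comp]; rfl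
    exact (shiftFunctor C (1 : ℤ)).map_injective (by rw [h2, (shiftFunctor C (1 : ℤ)).map_zero])
  -- Assemble the answer.
  refine ⟨X, f, ?_, ?_⟩
  · -- `X ∈ C(T)`
    exact ⟨_, _, f₁ ≫ D1.mor₁, p, q,
      ⟨n₁, 𝟙 _, 𝟙 _, Category.id_comp _⟩, ⟨n₀, 𝟙 _, 𝟙 _, Category.id_comp _⟩, hD3⟩
  · -- `f ∈ S`
    refine ⟨(Triangle.mk f e₀ h₀).invRotate.obj₁, (Triangle.mk f e₀ h₀).invRotate.mor₁,
      (Triangle.mk f e₀ h₀).invRotate.mor₃, inv_rot_of_distTriang _ hD4', ?_, ?_⟩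
    · -- the connecting map factors through `ΣT^⊥`
      have h1 : D1.mor₂ ≫ e₀ = 0 := by
        have h12 := comp_distTriang_mor_zero₁₂ _ hD4'
        dsimp only [Triangle.mk] at h12
        erw [← hpf, Category.assoc, h12, comp_zero]
      obtain ⟨σ, hσ⟩ := Triangle.yoneda_exact₃ _ hD1 e₀ h1
      refine ⟨(shiftFunctor C (1 : ℤ)).obj D1.obj₁, D1.mor₃,
        σ ≫ (shiftEquiv C (1 : ℤ)).counitIso.inv.app Z₄, ?_, ?_⟩
      · refine ⟨D1.obj₁, ?_, ⟨Iso.refl _⟩⟩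
        intro X' hX' φ
        refine zero_of_add T (fun u => ?_) hX' φ
        have h3 : u ≫ (shiftEquiv C (1 : ℤ)).counitIso.hom.app Z₁ = 0 := homTZ₁ _
        have he : u = (u ≫ (shiftEquiv C (1 : ℤ)).counitIso.hom.app Z₁)
            ≫ (shiftEquiv C (1 : ℤ)).counitIso.inv.app Z₁ := by
          erw [Category.assoc, Iso.hom_inv_id_app]
          exact (Category.comp_id _).symm
        rw [he, h3, zero_comp]; rfl
      · show D1.mor₃ ≫ σ ≫ _ = (Triangle.mk f e₀ h₀).invRotate.mor₃
        erw [← Category.assoc, ← hσ]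
        rfl
    · -- `Σ⁻¹Z₄ ∈ ΣT^⊥`
      refine ⟨(shiftFunctor C (-1 : ℤ)).obj ((shiftFunctor C (-1 : ℤ)).obj Z₄), ?_,
        ⟨((shiftEquiv C (1 : ℤ)).counitIso.app ((shiftFunctor C (-1 : ℤ)).obj Z₄)).symm⟩⟩
      intro X' hX' φ
      refine zero_of_add T (fun u => ?_) hX' φ
      have h3 : u ≫ (shiftEquiv C (1 : ℤ)).counitIso.hom.app
          ((shiftFunctor C (-1 : ℤ)).obj Z₄) = 0 := homTA _
      have he : u = (u ≫ (shiftEquiv C (1 : ℤ)).counitIso.hom.app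
            ((shiftFunctor C (-1 : ℤ)).obj Z₄))
          ≫ (shiftEquiv C (1 : ℤ)).counitIso.inv.app ((shiftFunctor C (-1 : ℤ)).obj Z₄) := by
        erw [Category.assoc, Iso.hom_inv_id_app]
        exact (Category.comp_id _).symm
      rw [he, h3, zero_comp]; rfl
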